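/- Let $M$ and $N$ be real symmetric $p \times p$ matrices and $1 \le k \le p$. Then the sum of the $k$ largest eigenvalues of $M + N$ is at most the sum of the $k$ largest eigenvalues of $M$ plus the sum of the $k$ largest eigenvalues of $N$ (Ky Fan's inequality). -/

import Mathlib

open Finset

/-- `μ` is a decreasing enumeration of the eigenvalues of the real symmetric
matrix `M`. -/
def IsSortedEigs {p : ℕ} (M : Matrix (Fin p) (Fin p) ℝ) (hM : M.IsHermitian)
    (μ : Fin p → ℝ) : Prop :=
  Antitone μ ∧ ∃ σ : Equiv.Perm (Fin p), μ = hM.eigenvalues ∘ σ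

open Matrix

lemma kf_abstract {p k : ℕ} (hk1 : 1 ≤ k) (hkp : k ≤ p)
    (μ w : Fin p → ℝ) (hμ : Antitone μ)
    (h0 : ∀ i, 0 ≤ w i) (h1 : ∀ i, w i ≤ 1) (hsum : ∑ i, w i = k) :
    ∑ i, μ i * w i ≤ ∑ i : Fin p, if (i : ℕ) < k then μ i else 0 := by
  have hkp' : k - 1 < p := lt_of_lt_of_le (Nat.sub_lt hk1 one_pos) hkp
  set c : ℝ := μ ⟨k - 1, hkp'⟩ with hc
  have key : ∀ i : Fin p, μ i * w i ≤ (if (i : ℕ) < k then μ i - c else 0) + c * w i := by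
    intro i
    by_cases h : (i : ℕ) < k
    · simp only [h, if_pos]
      have hci : c ≤ μ i := hμ (by simp [Fin.le_def, Nat.le_sub_one_of_lt h])
      nlinarith [h1 i, h0 i]
    · simp only [h, if_neg, not_false_iff]
      have hci : μ i ≤ c := hμ (by simp [Fin.le_def]; omega)
      nlinarith [h0 i]
  calc ∑ i, μ i * w i ≤ ∑ i : Fin p, ((if (i : ℕ) < k then μ i - c else 0) + c * w i) :=
        Finset.sum_le_sum fun i _ => key i
    _ = (∑ i : Fin p, if (i : ℕ) < k then μ i - c else 0) + c * ∑ i, w i := by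
        rw [Finset.sum_add_distrib, Finset.mul_sum]
    _ = (∑ i : Fin p, if (i : ℕ) < k then μ i - c else 0) + c * k := by rw [hsum]
    _ = ∑ i : Fin p, if (i : ℕ) < k then μ i else 0 := by
        have hcard : (univ.filter fun i : Fin p => (i : ℕ) < k).card = k := by
          have : (univ.filter fun i : Fin p => (i : ℕ) < k) =
              Finset.map (Fin.castLEEmb hkp) univ := by
            ext i
            simp only [mem_filter, mem_univ, true_and, Finset.mem_map, Fin.castLEEmb]
            constructor
            · intro h; exact ⟨⟨i, h⟩, by simp [Fin.castLE]⟩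
            · rintro ⟨j, rfl⟩; simpa using j.2
          simp [this]
        rw [← Finset.sum_filter, ← Finset.sum_filter, Finset.sum_sub_distrib]
        rw [Finset.sum_const, hcard]
        ring

lemma kf_conj_entry {p : ℕ} (A Vm : Matrix (Fin p) (Fin p) ℝ) (j : Fin p) :
    (star Vm * A * Vm) j j = ∑ a, ∑ b, Vm a j * (A a b * Vm b j) := by
  simp only [Matrix.mul_apply, Matrix.star_apply, star_trivial, Finset.sum_mul]
  rw [Finset.sum_comm]
  apply Finset.sum_congr rfl; intro a _
  apply Finset.sum_congr rfl; intro b _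
  ring

lemma kf_entry_spec {p : ℕ} (A : Matrix (Fin p) (Fin p) ℝ) (hA : A.IsHermitian) (a b : Fin p) :
    A a b = ∑ i, hA.eigenvalues i *
      ((hA.eigenvectorUnitary : Matrix (Fin p) (Fin p) ℝ) a i *
       (hA.eigenvectorUnitary : Matrix (Fin p) (Fin p) ℝ) b i) := by
  conv_lhs => rw [hA.spectral_theorem, Unitary.conjStarAlgAut_apply]
  rw [Matrix.mul_apply]
  simp only [Matrix.mul_diagonal, Matrix.star_apply, star_trivial, Function.comp_apply,
    RCLike.ofReal_real_eq_id, id_eq]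
  apply Finset.sum_congr rfl; intro i _
  ring

lemma kf_rows {p : ℕ} (U V : Matrix (Fin p) (Fin p) ℝ)
    (hU : U ∈ Matrix.unitaryGroup (Fin p) ℝ) (hV : V ∈ Matrix.unitaryGroup (Fin p) ℝ)
    (j : Fin p) : ∑ i, (∑ x, V x j * U x i) ^ 2 = 1 := by
  have hC : (star V * U) ∈ Matrix.unitaryGroup (Fin p) ℝ :=
    Submonoid.mul_mem _ (Unitary.star_mem hV) hU
  have h1 : (star V * U) * star (star V * U) = 1 := hC.2
  have := congr_fun (congr_fun h1 j) j
  simp only [Matrix.mul_apply, Matrix.star_apply, star_trivial, Matrix.one_apply_eq] at this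
  rw [← this]
  apply Finset.sum_congr rfl; intro i _
  ring

lemma kf_cols {p : ℕ} (U V : Matrix (Fin p) (Fin p) ℝ)
    (hU : U ∈ Matrix.unitaryGroup (Fin p) ℝ) (hV : V ∈ Matrix.unitaryGroup (Fin p) ℝ)
    (i : Fin p) : ∑ j, (∑ x, V x j * U x i) ^ 2 = 1 := by
  have hC : (star V * U) ∈ Matrix.unitaryGroup (Fin p) ℝ :=
    Submonoid.mul_mem _ (Unitary.star_mem hV) hU
  have h1 : star (star V * U) * (star V * U) = 1 := hC.1
  have := congr_fun (congr_fun h1 i) i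
  simp only [Matrix.mul_apply, Matrix.star_apply, star_trivial, Matrix.one_apply_eq] at this
  rw [← this]
  apply Finset.sum_congr rfl; intro j _
  ring

-- quadratic form expansion
lemma kf_quad {p : ℕ} (A : Matrix (Fin p) (Fin p) ℝ) (hA : A.IsHermitian)
    (V : Matrix (Fin p) (Fin p) ℝ) (j : Fin p) :
    (star V * A * V) j j
      = ∑ i, hA.eigenvalues i *
          (∑ x, V x j * (hA.eigenvectorUnitary : Matrix (Fin p) (Fin p) ℝ) x i) ^ 2 := by
  set U := (hA.eigenvectorUnitary : Matrix (Fin p) (Fin p) ℝ) with hUdef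
  rw [kf_conj_entry]
  have : ∀ a b, A a b = ∑ i, hA.eigenvalues i * (U a i * U b i) := kf_entry_spec A hA
  calc ∑ a, ∑ b, V a j * (A a b * V b j)
      = ∑ a, ∑ b, ∑ i, hA.eigenvalues i * (V a j * U a i) * (V b j * U b i) := by
        apply Finset.sum_congr rfl; intro a _
        apply Finset.sum_congr rfl; intro b _
        rw [this a b, Finset.sum_mul, Finset.mul_sum]
        apply Finset.sum_congr rfl; intro i _
        ring
    _ = ∑ a, ∑ i, ∑ b, hA.eigenvalues i * (V a j * U a i) * (V b j * U b i) := by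
        apply Finset.sum_congr rfl; intro a _
        exact Finset.sum_comm
    _ = ∑ i, ∑ a, ∑ b, hA.eigenvalues i * (V a j * U a i) * (V b j * U b i) :=
        Finset.sum_comm
    _ = ∑ i, hA.eigenvalues i * (∑ x, V x j * U x i) ^ 2 := by
        apply Finset.sum_congr rfl; intro i _
        rw [sq, Finset.sum_mul_sum, Finset.mul_sum]
        apply Finset.sum_congr rfl; intro a _
        rw [Finset.mul_sum]
        apply Finset.sum_congr rfl; intro b _
        ring

lemma kf_card {p k : ℕ} (hkp : k ≤ p) :
    (univ.filter fun i : Fin p => (i : ℕ) < k).card = k := by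
  have : (univ.filter fun i : Fin p => (i : ℕ) < k) =
      Finset.map (Fin.castLEEmb hkp) univ := by
    ext i
    simp only [mem_filter, mem_univ, true_and, Finset.mem_map, Fin.castLEEmb]
    constructor
    · intro h; exact ⟨⟨i, h⟩, by simp [Fin.castLE]⟩
    · rintro ⟨j, rfl⟩; simpa using j.2
  simp [this]

-- the main per-matrix bound
lemma kf_main {p k : ℕ} (hk1 : 1 ≤ k) (hkp : k ≤ p)
    (A : Matrix (Fin p) (Fin p) ℝ) (hA : A.IsHermitian)
    (μ : Fin p → ℝ) (hμa : Antitone μ) (σ : Equiv.Perm (Fin p))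
    (hμeq : μ = hA.eigenvalues ∘ σ)
    (V : Matrix (Fin p) (Fin p) ℝ) (hV : V ∈ Matrix.unitaryGroup (Fin p) ℝ)
    (S : Finset (Fin p)) (hS : S.card = k) :
    ∑ j ∈ S, (star V * A * V) j j ≤ ∑ i : Fin p, if (i : ℕ) < k then μ i else 0 := by
  set U := (hA.eigenvectorUnitary : Matrix (Fin p) (Fin p) ℝ) with hUdef
  have hU : U ∈ Matrix.unitaryGroup (Fin p) ℝ := hA.eigenvectorUnitary.2
  set w : Fin p → ℝ := fun i => ∑ j ∈ S, (∑ x, V x j * U x i) ^ 2 with hwdef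
  have h0 : ∀ i, 0 ≤ w i := fun i => Finset.sum_nonneg fun j _ => sq_nonneg _
  have h1 : ∀ i, w i ≤ 1 := by
    intro i
    calc w i ≤ ∑ j : Fin p, (∑ x, V x j * U x i) ^ 2 :=
          Finset.sum_le_sum_of_subset_of_nonneg (Finset.subset_univ S)
            (fun j _ _ => sq_nonneg _)
      _ = 1 := kf_cols U V hU hV i
  have hsum : ∑ i, w i = (k : ℝ) := by
    rw [hwdef]
    rw [Finset.sum_comm]
    calc ∑ j ∈ S, ∑ i, (∑ x, V x j * U x i) ^ 2
        = ∑ j ∈ S, (1 : ℝ) := Finset.sum_congr rfl fun j _ => kf_rows U V hU hV j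
      _ = (k : ℝ) := by rw [Finset.sum_const, hS]; simp
  have key : ∑ j ∈ S, (star V * A * V) j j = ∑ i, hA.eigenvalues i * w i := by
    calc ∑ j ∈ S, (star V * A * V) j j
        = ∑ j ∈ S, ∑ i, hA.eigenvalues i * (∑ x, V x j * U x i) ^ 2 :=
          Finset.sum_congr rfl fun j _ => kf_quad A hA V j
      _ = ∑ i, ∑ j ∈ S, hA.eigenvalues i * (∑ x, V x j * U x i) ^ 2 := Finset.sum_comm
      _ = ∑ i, hA.eigenvalues i * w i := by
          apply Finset.sum_congr rfl; intro i _
          rw [hwdef, Finset.mul_sum]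
  rw [key]
  have reidx : ∑ i, hA.eigenvalues i * w i = ∑ i, μ i * w (σ i) := by
    rw [hμeq]
    exact (Equiv.sum_comp σ (fun i => hA.eigenvalues i * w i)).symm
  rw [reidx]
  apply kf_abstract hk1 hkp μ (w ∘ σ) hμa (fun i => h0 _) (fun i => h1 _)
  calc ∑ i : Fin p, (w ∘ σ) i = ∑ i, w i := Equiv.sum_comp σ w
    _ = (k : ℝ) := hsum


/-- Ky Fan's inequality: the sum of the `k` largest eigenvalues of `M + N` is at
most the sum of the `k` largest eigenvalues of `M` plus that of `N`. -/
theorem kyFan_sum_top_eigenvalues {p : ℕ} (M N : Matrix (Fin p) (Fin p) ℝ)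
    (hM : M.IsHermitian) (hN : N.IsHermitian)
    (μ ν ρ : Fin p → ℝ) (hμ : IsSortedEigs M hM μ) (hν : IsSortedEigs N hN ν)
    (hρ : IsSortedEigs (M + N) (hM.add hN) ρ)
    (k : ℕ) (hk1 : 1 ≤ k) (hkp : k ≤ p) :
    ∑ i : Fin p, (if (i : ℕ) < k then ρ i else 0)
      ≤ (∑ i : Fin p, if (i : ℕ) < k then μ i else 0) + ∑ i : Fin p, (if (i : ℕ) < k then ν i else 0) := by
  obtain ⟨hμa, σ, hμeq⟩ := hμ
  obtain ⟨hνa, τ, hνeq⟩ := hν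
  obtain ⟨-, π, hρeq⟩ := hρ
  set V := ((hM.add hN).eigenvectorUnitary : Matrix (Fin p) (Fin p) ℝ) with hVdef
  have hV : V ∈ Matrix.unitaryGroup (Fin p) ℝ := (hM.add hN).eigenvectorUnitary.2
  set S : Finset (Fin p) := (univ.filter fun i : Fin p => (i : ℕ) < k).image π with hSdef
  have hS : S.card = k := by
    rw [hSdef, Finset.card_image_of_injective _ π.injective, kf_card hkp]
  have hdiag : ∀ j : Fin p, (hM.add hN).eigenvalues j = (star V * (M + N) * V) j j := by
    intro j
    have := (hM.add hN).conjStarAlgAut_star_eigenvectorUnitary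
    rw [Unitary.conjStarAlgAut_apply, Unitary.coe_star, star_star] at this
    have h2 := congr_fun (congr_fun this j) j
    simp only [Matrix.diagonal_apply_eq, Function.comp_apply, RCLike.ofReal_real_eq_id,
      id_eq] at h2
    exact h2.symm
  have lhs_eq : ∑ i : Fin p, (if (i : ℕ) < k then ρ i else 0)
      = ∑ j ∈ S, (star V * (M + N) * V) j j := by
    rw [← Finset.sum_filter, hSdef,
      Finset.sum_image (fun a _ b _ h => π.injective h)]
    apply Finset.sum_congr rfl; intro i _
    rw [hρeq]; exact hdiag (π i)
  have split : ∀ j, (star V * (M + N) * V) j j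
      = (star V * M * V) j j + (star V * N * V) j j := by
    intro j
    have : star V * (M + N) * V = star V * M * V + star V * N * V := by
      rw [Matrix.mul_add, Matrix.add_mul]
    rw [this]; rfl
  rw [lhs_eq]
  calc ∑ j ∈ S, (star V * (M + N) * V) j j
      = (∑ j ∈ S, (star V * M * V) j j) + ∑ j ∈ S, (star V * N * V) j j := by
        rw [← Finset.sum_add_distrib]
        exact Finset.sum_congr rfl fun j _ => split j
    _ ≤ _ := add_le_add
        (kf_main hk1 hkp M hM μ hμa σ hμeq V hV S hS)
        (kf_main hk1 hkp N hN ν hνa τ hνeq V hV S hS)
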